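/- Let w be a positive sequence on ℕ_{≥1} with c·w(k+1) ≤ w(k) ≤ d·w(k+1) for some c, d > 0. Define F₊(v)(k) = α(v(k-1)^L - v(k)^L) for k ≥ 1 (with v(0)=1). Then F₊ is Lipschitz on V = {v : v(0)=1, v nonincreasing, v(k) → 0} for the weighted norm ‖x‖² = Σ_{k≥1} x(k)² w(k)^{-1}: for u, v ∈ V, ‖F₊(u) - F₊(v)‖² ≤ 2α²L²(d+1)‖u - v‖². -/

import Mathlib

open Filter ENNReal

/-- `|u^n - v^n| ≤ n * |u - v|` for `u, v ∈ [0,1]`. -/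
lemma abs_pow_sub_pow_le_aux (u v : ℝ) (hu0 : 0 ≤ u) (hu1 : u ≤ 1)
    (hv0 : 0 ≤ v) (hv1 : v ≤ 1) (n : ℕ) :
    |u ^ n - v ^ n| ≤ n * |u - v| := by
  induction n with
  | zero => simp
  | succ n ih =>
    have h1 : u ^ (n + 1) - v ^ (n + 1) = u ^ n * (u - v) + v * (u ^ n - v ^ n) := by
      ring
    have hun : 0 ≤ u ^ n := pow_nonneg hu0 n
    have hun1 : u ^ n ≤ 1 := pow_le_one₀ hu0 hu1
    calc |u ^ (n + 1) - v ^ (n + 1)|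
        ≤ |u ^ n * (u - v)| + |v * (u ^ n - v ^ n)| := by rw [h1]; exact abs_add_le _ _
      _ = u ^ n * |u - v| + v * |u ^ n - v ^ n| := by
          rw [abs_mul, abs_mul, abs_of_nonneg hun, abs_of_nonneg hv0]
      _ ≤ (n + 1 : ℕ) * |u - v| := by
          push_cast
          nlinarith [abs_nonneg (u - v), abs_nonneg (u ^ n - v ^ n)]

/-- The map `F₊(v)(k) = α(v(k-1)^L - v(k)^L)` is Lipschitz on
`V = {v : v(0)=1, v nonincreasing, v → 0}` for the `L₂(w)` norm
(`‖x‖² = ∑_{k≥1} x(k)²/w(k)`), with constant `2α²L²(d+1)`,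
when the weight satisfies `c w(k+1) ≤ w(k) ≤ d w(k+1)`. -/
theorem Fplus_lipschitz (α : ℝ) (hα : 0 < α) (L : ℕ) (hL : 1 ≤ L)
    (w : ℕ → ℝ) (c d : ℝ) (hc : 0 < c) (hd : 0 < d)
    (hw : ∀ k, 1 ≤ k → 0 < w k)
    (hcw : ∀ k, 1 ≤ k → c * w (k + 1) ≤ w k)
    (hdw : ∀ k, 1 ≤ k → w k ≤ d * w (k + 1))
    (u v : ℕ → ℝ)
    (hu0 : u 0 = 1) (humono : Antitone u) (hulim : Tendsto u atTop (nhds 0))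
    (hv0 : v 0 = 1) (hvmono : Antitone v) (hvlim : Tendsto v atTop (nhds 0)) :
    ∑' k : ℕ, ENNReal.ofReal
        ((α * ((u k) ^ L - (u (k + 1)) ^ L) - α * ((v k) ^ L - (v (k + 1)) ^ L)) ^ 2
          / w (k + 1)) ≤
      ENNReal.ofReal (2 * α ^ 2 * L ^ 2 * (d + 1)) *
        ∑' k : ℕ, ENNReal.ofReal ((u (k + 1) - v (k + 1)) ^ 2 / w (k + 1)) := by
  set C : ℝ := 2 * α ^ 2 * (L : ℝ) ^ 2 with hC
  have hC0 : 0 ≤ C := by positivity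
  -- ranges
  have hur : ∀ k, 0 ≤ u k ∧ u k ≤ 1 := fun k =>
    ⟨humono.le_of_tendsto hulim k, hu0 ▸ humono (Nat.zero_le k)⟩
  have hvr : ∀ k, 0 ≤ v k ∧ v k ≤ 1 := fun k =>
    ⟨hvmono.le_of_tendsto hvlim k, hv0 ▸ hvmono (Nat.zero_le k)⟩
  -- key squared bound
  have hsq : ∀ k, ((u k) ^ L - (v k) ^ L) ^ 2 ≤ (L : ℝ) ^ 2 * (u k - v k) ^ 2 := by
    intro k
    have h := abs_pow_sub_pow_le_aux (u k) (v k) (hur k).1 (hur k).2 (hvr k).1 (hvr k).2 L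
    have h2 : |u k ^ L - v k ^ L| ^ 2 ≤ ((L : ℝ) * |u k - v k|) ^ 2 := by
      apply pow_le_pow_left₀ (abs_nonneg _) h
    calc ((u k) ^ L - (v k) ^ L) ^ 2 = |u k ^ L - v k ^ L| ^ 2 := (sq_abs _).symm
      _ ≤ ((L : ℝ) * |u k - v k|) ^ 2 := h2
      _ = (L : ℝ) ^ 2 * (u k - v k) ^ 2 := by rw [mul_pow, sq_abs]
  -- pointwise real bound
  have key : ∀ k : ℕ,
      (α * ((u k) ^ L - (u (k + 1)) ^ L) - α * ((v k) ^ L - (v (k + 1)) ^ L)) ^ 2 / w (k + 1)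
        ≤ C * (u k - v k) ^ 2 / w (k + 1) + C * (u (k + 1) - v (k + 1)) ^ 2 / w (k + 1) := by
    intro k
    have hw1 : 0 < w (k + 1) := hw _ (by omega)
    rw [← add_div]
    apply div_le_div_of_nonneg_right ?_ hw1.le
    nlinarith [hsq k, hsq (k + 1), sq_nonneg ((u k ^ L - v k ^ L) + (u (k+1) ^ L - v (k+1) ^ L)),
      sq_nonneg ((u k ^ L - v k ^ L) - (u (k+1) ^ L - v (k+1) ^ L)), sq_nonneg α, hα.le]
  -- notation
  set g : ℕ → ℝ≥0∞ := fun k => ENNReal.ofReal ((u (k + 1) - v (k + 1)) ^ 2 / w (k + 1)) with hg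
  set P : ℕ → ℝ≥0∞ := fun k => ENNReal.ofReal (C * (u k - v k) ^ 2 / w (k + 1)) with hP
  have hwpos : ∀ k : ℕ, 0 < w (k + 1) := fun k => hw _ (by omega)
  have step1 : ∑' k : ℕ, ENNReal.ofReal
      ((α * ((u k) ^ L - (u (k + 1)) ^ L) - α * ((v k) ^ L - (v (k + 1)) ^ L)) ^ 2
        / w (k + 1)) ≤ ∑' k : ℕ, (P k + ENNReal.ofReal C * g k) := by
    apply ENNReal.tsum_le_tsum
    intro k
    have h1 : ENNReal.ofReal C * g k = ENNReal.ofReal (C * (u (k + 1) - v (k + 1)) ^ 2 / w (k + 1)) := by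
      rw [hg, ← ENNReal.ofReal_mul hC0, mul_div_assoc]
    rw [h1, hP]
    calc ENNReal.ofReal _ ≤ ENNReal.ofReal (C * (u k - v k) ^ 2 / w (k + 1)
          + C * (u (k + 1) - v (k + 1)) ^ 2 / w (k + 1)) := ENNReal.ofReal_le_ofReal (key k)
      _ ≤ _ := ENNReal.ofReal_add_le
  have hPshift : ∑' k : ℕ, P k = ∑' k : ℕ, P (k + 1) := by
    rw [tsum_eq_zero_add' ENNReal.summable]
    have : P 0 = 0 := by simp [hP, hu0, hv0]
    rw [this, zero_add]
  have hPbound : ∑' k : ℕ, P (k + 1) ≤ ENNReal.ofReal (C * d) * ∑' k : ℕ, g k := by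
    rw [← ENNReal.tsum_mul_left]
    apply ENNReal.tsum_le_tsum
    intro k
    have h1 : ENNReal.ofReal (C * d) * g k
        = ENNReal.ofReal (C * d * ((u (k + 1) - v (k + 1)) ^ 2 / w (k + 1))) := by
      rw [hg, ← ENNReal.ofReal_mul (by positivity)]
    rw [h1, hP]
    apply ENNReal.ofReal_le_ofReal
    have hw1 : 0 < w (k + 1) := hwpos k
    have hw2 : 0 < w (k + 2) := hwpos (k + 1)
    have hdd : w (k + 1) ≤ d * w (k + 2) := hdw _ (by omega)
    have hy : 0 ≤ C * (u (k + 1) - v (k + 1)) ^ 2 := by positivity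
    rw [show C * d * ((u (k + 1) - v (k + 1)) ^ 2 / w (k + 1))
        = C * d * (u (k + 1) - v (k + 1)) ^ 2 / w (k + 1) from (mul_div_assoc _ _ _).symm,
      div_le_div_iff₀ hw2 hw1]
    nlinarith [mul_le_mul_of_nonneg_left hdd hy]
  have hQ : ∑' k : ℕ, ENNReal.ofReal C * g k = ENNReal.ofReal C * ∑' k : ℕ, g k :=
    ENNReal.tsum_mul_left
  refine le_trans step1 ?_
  rw [ENNReal.tsum_add, hQ, hPshift]
  have hconst : ENNReal.ofReal (2 * α ^ 2 * L ^ 2 * (d + 1))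
      = ENNReal.ofReal (C * d) + ENNReal.ofReal C := by
    rw [← ENNReal.ofReal_add (by positivity) hC0]
    congr 1
    push_cast
    ring
  rw [hconst, add_mul]
  exact add_le_add_left hPbound _
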